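/- The function ζ ↦ L(ζ,−1) is strictly increasing on the interval [−1.5, −1.25] (i.e., ∂L(ζ,−1)/∂ζ > 0 there), and its maximal value satisfies L(−1.25, −1) < 0; consequently max_{ζ ∈ [−1.5,−1.25]} L(ζ,−1) < 0. -/

import Mathlib

open Real Set

/-- The auxiliary function `L(ζ, s)` from Lemma 2.4 of the paper. -/
noncomputable def Lfun (ζ s : ℝ) : ℝ :=
  s - ζ - Real.log (1 + s - ζ) +
    2 * (ζ + 1 / 2) ^ 2 * (s - ζ) ^ 2 /
      ((2 * ζ + 1) * ζ ^ 2 + (2 / 3) * ζ * (s - ζ))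

lemma Lfun_hasDerivAt {ζ : ℝ} (h1 : ζ < -1) :
    HasDerivAt (fun ζ => Lfun ζ (-1))
      (-(36 * ζ ^ 2 + 16 * ζ - 3) * (ζ + 1) ^ 3 /
        (ζ ^ 2 * (3 * ζ + 2) ^ 2 * (2 * ζ - 1) ^ 2)) ζ := by
  have hζ0 : ζ ≠ 0 := by nlinarith
  have h32 : 3 * ζ + 2 ≠ 0 := by nlinarith
  have h21 : 2 * ζ - 1 ≠ 0 := by nlinarith
  have hD : (2 * ζ + 1) * ζ ^ 2 + (2 / 3) * ζ * ((-1 : ℝ) - ζ) ≠ 0 := by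
    have : (2 * ζ + 1) * ζ ^ 2 + (2 / 3) * ζ * ((-1 : ℝ) - ζ)
        = (ζ / 3) * (3 * ζ + 2) * (2 * ζ - 1) := by ring
    rw [this]
    exact mul_ne_zero (mul_ne_zero (by simpa using hζ0) h32) h21
  have hlogarg : (1 : ℝ) + (-1) - ζ ≠ 0 := by
    intro h; apply hζ0; linarith
  have hinner : HasDerivAt (fun ζ : ℝ => (1 : ℝ) + (-1) - ζ) (-1) ζ := by
    exact (hasDerivAt_id' ζ).const_sub ((1 : ℝ) + (-1))
  have hlog : HasDerivAt (fun ζ : ℝ => Real.log ((1 : ℝ) + (-1) - ζ))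
      ((-1) / ((1 : ℝ) + (-1) - ζ)) ζ := hinner.log hlogarg
  have hfirst : HasDerivAt (fun ζ : ℝ => (-1 : ℝ) - ζ) (-1) ζ := by
    exact (hasDerivAt_id' ζ).const_sub (-1 : ℝ)
  have ha : HasDerivAt (fun ζ : ℝ => ζ + 1 / 2) 1 ζ := by
    simpa using (hasDerivAt_id ζ).add_const (1 / 2 : ℝ)
  have hb : HasDerivAt (fun ζ : ℝ => (-1 : ℝ) - ζ) (-1) ζ := hfirst
  have hnum : HasDerivAt (fun ζ : ℝ => 2 * (ζ + 1 / 2) ^ 2 * ((-1 : ℝ) - ζ) ^ 2)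
      ((2 * (2 * (ζ + 1 / 2) ^ 1 * 1)) * ((-1 : ℝ) - ζ) ^ 2 +
        (2 * (ζ + 1 / 2) ^ 2) * (2 * ((-1 : ℝ) - ζ) ^ 1 * (-1))) ζ := by
    exact ((ha.pow 2).const_mul 2).mul (hb.pow 2)
  have hden : HasDerivAt (fun ζ : ℝ => (2 * ζ + 1) * ζ ^ 2 + (2 / 3) * ζ * ((-1 : ℝ) - ζ))
      (6 * ζ ^ 2 + (2 / 3) * ζ - 2 / 3) ζ := by
    have h2ζ : HasDerivAt (fun ζ : ℝ => 2 * ζ + 1) 2 ζ := by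
      simpa using ((hasDerivAt_id ζ).const_mul 2).add_const (1 : ℝ)
    have hsq : HasDerivAt (fun ζ : ℝ => ζ ^ 2) (2 * ζ ^ 1 * 1) ζ := (hasDerivAt_id ζ).pow 2
    have hc : HasDerivAt (fun ζ : ℝ => (2 / 3) * ζ) (2 / 3) ζ := by
      simpa using (hasDerivAt_id ζ).const_mul (2 / 3 : ℝ)
    have := (h2ζ.mul hsq).add (hc.mul hb)
    refine this.congr_deriv ?_
    ring
  have hdiv := hnum.div hden hD
  have htotal := (hfirst.sub hlog).add hdiv
  have heq : ∀ x : ℝ, Lfun x (-1) =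
      (-1 : ℝ) - x - Real.log ((1 : ℝ) + (-1) - x) +
        2 * (x + 1 / 2) ^ 2 * ((-1 : ℝ) - x) ^ 2 /
          ((2 * x + 1) * x ^ 2 + (2 / 3) * x * ((-1 : ℝ) - x)) := by
    intro x; simp [Lfun]
  have htotal2 := htotal.congr_of_eventuallyEq (Filter.Eventually.of_forall heq)
  refine htotal2.congr_deriv ?_
  have e1 : (1:ℝ) + (-1) - ζ = -ζ := by ring
  have hDf : (2*ζ+1)*ζ^2 + 2/3*ζ*((-1:ℝ)-ζ) = ζ/3*(3*ζ+2)*(2*ζ-1) := by ring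
  rw [e1, hDf]
  have h3 : ζ/3*(3*ζ+2)*(2*ζ-1) ≠ 0 :=
    mul_ne_zero (mul_ne_zero (by simpa using hζ0) h32) h21
  field_simp
  have hq : (ζ * 3 + 2) ^ 2 * (ζ * 2 - 1) ^ 2 ≠ 0 := by
    have a : ζ * 3 + 2 ≠ 0 := by intro h; apply h32; linarith
    have b : ζ * 2 - 1 ≠ 0 := by intro h; apply h21; linarith
    positivity
  rw [add_div' _ _ _ hq, neg_div', div_left_inj' hq]
  ring

lemma Lfun_deriv_pos {ζ : ℝ} (ha : -1.5 ≤ ζ) (hb : ζ ≤ -1.25) :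
    0 < -(36 * ζ ^ 2 + 16 * ζ - 3) * (ζ + 1) ^ 3 /
        (ζ ^ 2 * (3 * ζ + 2) ^ 2 * (2 * ζ - 1) ^ 2) := by
  have hA : 0 < 36 * ζ ^ 2 + 16 * ζ - 3 := by nlinarith
  have hB : (ζ + 1) ^ 3 < 0 := by
    have h4 : ζ + 1 < 0 := by linarith
    exact Odd.pow_neg (by decide) h4
  have hnum : 0 < -(36 * ζ ^ 2 + 16 * ζ - 3) * (ζ + 1) ^ 3 := by
    nlinarith [mul_pos hA (show (0:ℝ) < -((ζ + 1) ^ 3) by linarith)]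
  have h1 : (0:ℝ) < ζ ^ 2 := by nlinarith
  have h2 : (0:ℝ) < (3 * ζ + 2) ^ 2 := by nlinarith
  have h3 : (0:ℝ) < (2 * ζ - 1) ^ 2 := by nlinarith
  exact div_pos hnum (mul_pos (mul_pos h1 h2) h3)

lemma Lfun_value_neg : Lfun (-1.25) (-1) < 0 := by
  have hexp : Real.exp (109 / 490) < 5 / 4 := by
    have h := Real.exp_bound' (x := 109 / 490) (by norm_num) (by norm_num)
      (n := 4) (by norm_num)
    calc Real.exp (109 / 490)
        ≤ (∑ m ∈ Finset.range 4, (109 / 490 : ℝ) ^ m / m.factorial) +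
            (109 / 490 : ℝ) ^ 4 * (4 + 1) / (Nat.factorial 4 * 4) := h
      _ < 5 / 4 := by
          norm_num [Finset.sum_range_succ, Nat.factorial]
  have hlog : (109 : ℝ) / 490 < Real.log (5 / 4) := by
    have := Real.log_lt_log (Real.exp_pos _) hexp
    rwa [Real.log_exp] at this
  have hval : Lfun (-1.25) (-1) = 109 / 490 - Real.log (5 / 4) := by
    norm_num [Lfun]
    ring
  rw [hval]
  linarith

/-- The map `ζ ↦ L(ζ, -1)` is strictly increasing on `[-1.5, -1.25]` (its
derivative is positive there), its maximal value `L(-1.25, -1)` is negative,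
and consequently `L(ζ, -1) < 0` on the whole interval. -/
theorem Lfun_at_minus_one_increasing_and_negative :
    StrictMonoOn (fun ζ => Lfun ζ (-1)) (Set.Icc (-1.5 : ℝ) (-1.25)) ∧
    (∀ ζ ∈ Set.Icc (-1.5 : ℝ) (-1.25), 0 < deriv (fun ζ => Lfun ζ (-1)) ζ) ∧
    Lfun (-1.25) (-1) < 0 ∧
    (∀ ζ ∈ Set.Icc (-1.5 : ℝ) (-1.25), Lfun ζ (-1) < 0) := by
  have key : ∀ ζ ∈ Set.Icc (-1.5 : ℝ) (-1.25), 0 < deriv (fun ζ => Lfun ζ (-1)) ζ := by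
    intro ζ hζ
    obtain ⟨ha, hb⟩ := hζ
    have hlt : ζ < -1 := by linarith
    rw [(Lfun_hasDerivAt hlt).deriv]
    exact Lfun_deriv_pos ha hb
  have hmono : StrictMonoOn (fun ζ => Lfun ζ (-1)) (Set.Icc (-1.5 : ℝ) (-1.25)) := by
    apply strictMonoOn_of_deriv_pos (convex_Icc _ _)
    · intro x hx
      have hlt : x < -1 := by linarith [hx.2]
      exact ((Lfun_hasDerivAt hlt).differentiableAt.continuousAt).continuousWithinAt
    · intro x hx
      exact key x (interior_subset hx)
  refine ⟨hmono, key, Lfun_value_neg, ?_⟩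
  intro ζ hζ
  rcases eq_or_lt_of_le hζ.2 with h | h
  · rw [h]; exact Lfun_value_neg
  · have : Lfun ζ (-1) < Lfun (-1.25) (-1) :=
      hmono hζ ⟨by norm_num, le_refl _⟩ h
    linarith [Lfun_value_neg]
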